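/- For a gradient-flow trajectory of a two-layer ReLU network on an orthogonally separable dataset, starting from a balanced and live initialisation, with either the exponential or the logistic loss: for every i ∈ [n] there exists j ∈ [k] such that w_j(t)^T x_i → ∞ as t → ∞. -/

import Mathlib

open MeasureTheory Filter Finset

/-- Euclidean inner product of real vectors. -/
noncomputable def dotp {m : ℕ} (u v : Fin m → ℝ) : ℝ := ∑ i, u i * v i

/-- Euclidean norm of a real vector. -/
noncomputable def norm2 {m : ℕ} (v : Fin m → ℝ) : ℝ := Real.sqrt (∑ i, v i ^ 2)

/-- The ReLU function `ψ(u) = max{u, 0}`. -/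
noncomputable def relu (u : ℝ) : ℝ := max u 0

/-- The two-layer ReLU network `N_θ(z) = Σ_j a_j ψ(w_jᵀ z)`. -/
noncomputable def net {d k : ℕ} (w : Fin k → Fin d → ℝ) (a : Fin k → ℝ)
    (z : Fin d → ℝ) : ℝ :=
  ∑ j, a j * relu (dotp (w j) z)

section Aux

lemma relu_nonneg (u : ℝ) : 0 ≤ relu u := le_max_right _ _

lemma relu_le_abs (u : ℝ) : relu u ≤ |u| := max_le (le_abs_self u) (abs_nonneg u)

lemma norm2_nonneg {m : ℕ} (v : Fin m → ℝ) : 0 ≤ norm2 v := Real.sqrt_nonneg _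

lemma norm2_sq {m : ℕ} (v : Fin m → ℝ) : (norm2 v) ^ 2 = ∑ i, v i ^ 2 :=
  Real.sq_sqrt (Finset.sum_nonneg fun i _ => sq_nonneg _)

lemma dotp_le_norm2 {m : ℕ} (u v : Fin m → ℝ) : dotp u v ≤ norm2 u * norm2 v := by
  rcases le_or_gt (dotp u v) 0 with h | h
  · exact h.trans (mul_nonneg (norm2_nonneg u) (norm2_nonneg v))
  · have h1 : (dotp u v) ^ 2 ≤ (norm2 u * norm2 v) ^ 2 := by
      rw [mul_pow, norm2_sq, norm2_sq]
      exact Finset.sum_mul_sq_le_sq_mul_sq _ _ _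
    have h2 : 0 ≤ norm2 u * norm2 v := mul_nonneg (norm2_nonneg u) (norm2_nonneg v)
    nlinarith
  
lemma norm2_eq_zero {m : ℕ} {v : Fin m → ℝ} (h : norm2 v = 0) : ∀ i, v i = 0 := by
  intro i
  have h1 : (norm2 v) ^ 2 = 0 := by rw [h]; ring
  rw [norm2_sq] at h1
  have := Finset.sum_eq_zero_iff_of_nonneg (fun i _ => sq_nonneg (v i)) |>.1 h1 i (Finset.mem_univ i)
  exact pow_eq_zero_iff (by norm_num) |>.1 this

/-- The two admissible losses have continuous, everywhere-negative derivative,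
bounded away from `0` on rays `(-∞, G]`. -/
lemma loss_deriv_exp (u : ℝ) : deriv (fun u => Real.exp (-u)) u = -Real.exp (-u) := by
  have h : HasDerivAt (fun u : ℝ => Real.exp (-u)) (-Real.exp (-u)) u := by
    simpa [Function.comp_def] using (Real.hasDerivAt_exp (-u)).comp u (hasDerivAt_neg u)
  exact h.deriv

lemma loss_deriv_log (u : ℝ) :
    deriv (fun u => Real.log (1 + Real.exp (-u))) u = -Real.exp (-u) / (1 + Real.exp (-u)) := by
  have hpos : (0:ℝ) < 1 + Real.exp (-u) := by positivity
  have hinner : HasDerivAt (fun u : ℝ => 1 + Real.exp (-u)) (-Real.exp (-u)) u := by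
    simpa using (((Real.hasDerivAt_exp (-u)).comp u (hasDerivAt_neg u)).const_add 1)
  have h := hinner.log (ne_of_gt hpos)
  exact h.deriv

lemma loss_cont_deriv {l : ℝ → ℝ}
    (hl : (l = fun u => Real.exp (-u)) ∨ (l = fun u => Real.log (1 + Real.exp (-u)))) :
    Continuous (deriv l) := by
  rcases hl with rfl | rfl
  · have : deriv (fun u : ℝ => Real.exp (-u)) = fun u => -Real.exp (-u) := by
      funext u; exact loss_deriv_exp u
    rw [this]; continuity
  · have : deriv (fun u : ℝ => Real.log (1 + Real.exp (-u)))
        = fun u => -Real.exp (-u) / (1 + Real.exp (-u)) := by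
      funext u; exact loss_deriv_log u
    rw [this]
    apply Continuous.div (by continuity) (by continuity)
    intro u; positivity

lemma loss_deriv_lb {l : ℝ → ℝ}
    (hl : (l = fun u => Real.exp (-u)) ∨ (l = fun u => Real.log (1 + Real.exp (-u))))
    (G : ℝ) : ∃ ρ > 0, ∀ u ≤ G, ρ ≤ -(deriv l u) := by
  rcases hl with rfl | rfl
  · refine ⟨Real.exp (-G), Real.exp_pos _, fun u hu => ?_⟩
    rw [loss_deriv_exp, neg_neg]
    exact Real.exp_le_exp.2 (by linarith)
  · refine ⟨Real.exp (-G) / (1 + Real.exp (-G)), by positivity, fun u hu => ?_⟩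
    rw [loss_deriv_log, neg_div, neg_neg]
    have e1 : Real.exp (-G) / (1 + Real.exp (-G)) = 1 / (Real.exp G + 1) := by
      rw [div_eq_div_iff (by positivity) (by positivity)]
      have : Real.exp (-G) * Real.exp G = 1 := by
        rw [← Real.exp_add]; simp
      ring_nf
      nlinarith [this]
    have e2 : Real.exp (-u) / (1 + Real.exp (-u)) = 1 / (Real.exp u + 1) := by
      rw [div_eq_div_iff (by positivity) (by positivity)]
      have : Real.exp (-u) * Real.exp u = 1 := by
        rw [← Real.exp_add]; simp
      ring_nf
      nlinarith [this]
    rw [e1, e2]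
    apply one_div_le_one_div_of_le (by positivity)
    have := Real.exp_le_exp.2 hu
    linarith

lemma loss_deriv_neg {l : ℝ → ℝ}
    (hl : (l = fun u => Real.exp (-u)) ∨ (l = fun u => Real.log (1 + Real.exp (-u))))
    (u : ℝ) : 0 < -(deriv l u) := by
  obtain ⟨ρ, hρ, hb⟩ := loss_deriv_lb hl u
  exact lt_of_lt_of_le hρ (hb u le_rfl)

end Aux


section Gronwall

/-- Integral-form Grönwall inequality with continuous data. -/
lemma gronwall_integral {u c : ℝ → ℝ} {T K : ℝ} (hu : Continuous u) (hc : Continuous c)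
    (hc0 : ∀ t, T ≤ t → 0 ≤ c t)
    (hK : ∀ t, T ≤ t → u t ≤ K + ∫ s in T..t, c s * u s) :
    ∀ t, T ≤ t → u t ≤ K * Real.exp (∫ s in T..t, c s) := by
  have hcu : Continuous fun s => c s * u s := hc.mul hu
  have hBd : ∀ t, HasDerivAt (fun t => K + ∫ s in T..t, c s * u s) (c t * u t) t := by
    intro t
    exact ((hcu.integral_hasStrictDerivAt T t).hasDerivAt).const_add K
  have hEd : ∀ t, HasDerivAt (fun t => ∫ s in T..t, c s) (c t) t := fun t =>
    (hc.integral_hasStrictDerivAt T t).hasDerivAt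
  have hGd : ∀ t, HasDerivAt
      (fun t => (K + ∫ s in T..t, c s * u s) * Real.exp (-(∫ s in T..t, c s)))
      ((c t * u t - c t * (K + ∫ s in T..t, c s * u s)) * Real.exp (-(∫ s in T..t, c s))) t := by
    intro t
    have h1 : HasDerivAt (fun t => Real.exp (-(∫ s in T..t, c s)))
        (-(c t) * Real.exp (-(∫ s in T..t, c s))) t := by
      have := (Real.hasDerivAt_exp (-(∫ s in T..t, c s))).comp t ((hEd t).neg)
      simpa [mul_comm, Function.comp_def] using this
    have := (hBd t).mul h1
    refine this.congr_deriv ?_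
    ring
  have hBc : Continuous fun t => K + ∫ s in T..t, c s * u s := by
    apply Continuous.add continuous_const
    exact intervalIntegral.continuous_primitive (fun a b => hcu.intervalIntegrable _ _) T
  have hEc : Continuous fun t => ∫ s in T..t, c s := by
    exact intervalIntegral.continuous_primitive (fun a b => hc.intervalIntegrable _ _) T
  have hanti : AntitoneOn
      (fun t => (K + ∫ s in T..t, c s * u s) * Real.exp (-(∫ s in T..t, c s)))
      (Set.Ici T) := by
    apply antitoneOn_of_deriv_nonpos (convex_Ici T)
    · exact (hBc.mul (by fun_prop)).continuousOn
    · intro t ht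
      exact (hGd t).differentiableAt.differentiableWithinAt
    · intro t ht
      rw [interior_Ici] at ht
      rw [(hGd t).deriv]
      have hub : u t ≤ K + ∫ s in T..t, c s * u s := hK t (le_of_lt ht)
      have := hc0 t (le_of_lt ht)
      have hexp : (0:ℝ) < Real.exp (-(∫ s in T..t, c s)) := Real.exp_pos _
      nlinarith [mul_nonneg (mul_nonneg this (sub_nonneg.2 hub)) hexp.le]
  intro t ht
  have h1 := hanti (Set.self_mem_Ici) ht ht
  simp only [intervalIntegral.integral_same, neg_zero, Real.exp_zero, add_zero, mul_one] at h1
  have h3 : u t ≤ K + ∫ s in T..t, c s * u s := hK t ht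
  have hexp : (0:ℝ) < Real.exp (-(∫ s in T..t, c s)) := Real.exp_pos _
  have h4 : (K + ∫ s in T..t, c s * u s) ≤ K * Real.exp (∫ s in T..t, c s) := by
    calc K + ∫ s in T..t, c s * u s
        = ((K + ∫ s in T..t, c s * u s) * Real.exp (-(∫ s in T..t, c s)))
            * Real.exp (∫ s in T..t, c s) := by
          rw [mul_assoc, ← Real.exp_add]; simp
      _ ≤ K * Real.exp (∫ s in T..t, c s) :=
          mul_le_mul_of_nonneg_right h1 (Real.exp_nonneg _)
  exact h3.trans h4

end Gronwall


section SqPrimitive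

lemma primitive_sq_key {f : ℝ → ℝ} (hf : ∀ t, IntervalIntegrable f volume 0 t)
    {t : ℝ} (ht : 0 ≤ t) :
    (∫ s in (0:ℝ)..t, f s) ^ 2
      = 2 * ∫ s in (0:ℝ)..t, f s * (∫ u in (0:ℝ)..s, f u) := by
  set A : Set ℝ := Set.Ioc 0 t with hA
  have hfi : IntegrableOn f A volume := (hf t).1
  set μA : Measure ℝ := volume.restrict A with hμA
  set φ : ℝ × ℝ → ℝ := fun z => f z.1 * f z.2 with hφ
  have hprod : Integrable φ (μA.prod μA) := Integrable.mul_prod hfi hfi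
  have hS : MeasurableSet {z : ℝ × ℝ | z.2 ≤ z.1} :=
    (isClosed_le continuous_snd continuous_fst).measurableSet
  -- full square
  have hsq : (∫ s in (0:ℝ)..t, f s) ^ 2 = ∫ z, φ z ∂(μA.prod μA) := by
    rw [intervalIntegral.integral_of_le ht]
    rw [MeasureTheory.integral_prod_mul f f]
    ring
  -- split
  have hsplit : ∫ z, φ z ∂(μA.prod μA)
      = (∫ z in {z : ℝ × ℝ | z.2 ≤ z.1}, φ z ∂(μA.prod μA))
        + ∫ z in {z : ℝ × ℝ | z.2 ≤ z.1}ᶜ, φ z ∂(μA.prod μA) :=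
    (MeasureTheory.integral_add_compl hS hprod).symm
  -- triangle 1
  have htri1 : ∫ z in {z : ℝ × ℝ | z.2 ≤ z.1}, φ z ∂(μA.prod μA)
      = ∫ s in (0:ℝ)..t, f s * (∫ u in (0:ℝ)..s, f u) := by
    rw [← MeasureTheory.integral_indicator hS]
    rw [MeasureTheory.integral_prod _ (hprod.indicator hS)]
    rw [intervalIntegral.integral_of_le ht]
    apply MeasureTheory.setIntegral_congr_fun measurableSet_Ioc
    intro s hs
    have h1 : (fun y => Set.indicator {z : ℝ × ℝ | z.2 ≤ z.1} φ (s, y))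
        = Set.indicator (Set.Iic s) (fun y => f s * f y) := by
      funext y
      by_cases hy : y ≤ s <;>
        simp [Set.indicator_apply, hφ, hy]
    dsimp only
    rw [h1, MeasureTheory.integral_indicator measurableSet_Iic]
    rw [hμA, Measure.restrict_restrict measurableSet_Iic]
    have h2 : Set.Iic s ∩ A = Set.Ioc 0 s := by
      ext z
      simp only [Set.mem_inter_iff, Set.mem_Iic, hA, Set.mem_Ioc]
      constructor
      · rintro ⟨h3, h4, h5⟩; exact ⟨h4, h3⟩
      · rintro ⟨h3, h4⟩; exact ⟨h4, h3, h4.trans hs.2⟩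
    rw [h2, MeasureTheory.integral_const_mul]
    rw [intervalIntegral.integral_of_le hs.1.le]
  -- triangle 2
  have htri2 : ∫ z in {z : ℝ × ℝ | z.2 ≤ z.1}ᶜ, φ z ∂(μA.prod μA)
      = ∫ s in (0:ℝ)..t, f s * (∫ u in (0:ℝ)..s, f u) := by
    rw [← MeasureTheory.integral_indicator hS.compl]
    rw [MeasureTheory.integral_prod_symm _ (hprod.indicator hS.compl)]
    rw [intervalIntegral.integral_of_le ht]
    apply MeasureTheory.setIntegral_congr_fun measurableSet_Ioc
    intro s hs
    -- here `s` plays the role of the second coordinate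
    have h1 : (fun u => Set.indicator ({z : ℝ × ℝ | z.2 ≤ z.1}ᶜ) φ (u, s))
        = Set.indicator (Set.Iio s) (fun u => f u * f s) := by
      funext u
      by_cases hu : u < s
      · simp [Set.indicator_apply, hφ, Set.mem_compl_iff, Set.mem_setOf_eq, hu, not_le.2 hu]
      · simp [Set.indicator_apply, hφ, Set.mem_compl_iff, Set.mem_setOf_eq, hu, not_lt.1 hu]
    dsimp only
    rw [h1, MeasureTheory.integral_indicator measurableSet_Iio]
    rw [hμA, Measure.restrict_restrict measurableSet_Iio]
    have h2 : Set.Iio s ∩ A = Set.Ioo 0 s := by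
      ext z
      simp only [Set.mem_inter_iff, Set.mem_Iio, hA, Set.mem_Ioc, Set.mem_Ioo]
      constructor
      · rintro ⟨h3, h4, h5⟩; exact ⟨h4, h3⟩
      · rintro ⟨h3, h4⟩; exact ⟨h4, h3, h4.le.trans hs.2⟩
    rw [h2, MeasureTheory.integral_mul_const]
    rw [← MeasureTheory.integral_Ioc_eq_integral_Ioo,
      ← intervalIntegral.integral_of_le hs.1.le, mul_comm]
  rw [hsq, hsplit, htri1, htri2]
  ring

end SqPrimitive

/-- Square of a primitive, full version. -/
lemma primitive_sq {f : ℝ → ℝ} (hf : ∀ t, IntervalIntegrable f volume 0 t) (c : ℝ)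
    {t : ℝ} (ht : 0 ≤ t) :
    (c + ∫ s in (0:ℝ)..t, f s) ^ 2
      = c ^ 2 + ∫ s in (0:ℝ)..t, 2 * (c + ∫ u in (0:ℝ)..s, f u) * f s := by
  have hf' : ∀ t₁ t₂, IntervalIntegrable f volume t₁ t₂ := fun t₁ t₂ =>
    (hf t₁).symm.trans (hf t₂)
  have hFc : Continuous fun s => ∫ u in (0:ℝ)..s, f u :=
    intervalIntegral.continuous_primitive (fun a b => hf' a b) 0
  have hint1 : IntervalIntegrable (fun s => 2 * c * f s) volume 0 t :=
    (hf t).const_mul _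
  have hint2 : IntervalIntegrable (fun s => 2 * (∫ u in (0:ℝ)..s, f u) * f s) volume 0 t := by
    have := (hf t).continuousOn_mul (g := fun s => 2 * ∫ u in (0:ℝ)..s, f u)
      (by exact (continuous_const.mul hFc).continuousOn)
    exact this
  have hsplit : ∫ s in (0:ℝ)..t, 2 * (c + ∫ u in (0:ℝ)..s, f u) * f s
      = (∫ s in (0:ℝ)..t, 2 * c * f s)
        + ∫ s in (0:ℝ)..t, 2 * (∫ u in (0:ℝ)..s, f u) * f s := by
    rw [← intervalIntegral.integral_add hint1 hint2]
    apply intervalIntegral.integral_congr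
    intro s _
    ring
  have h1 : ∫ s in (0:ℝ)..t, 2 * c * f s = 2 * c * ∫ s in (0:ℝ)..t, f s :=
    intervalIntegral.integral_const_mul _ _
  have h2 : ∫ s in (0:ℝ)..t, 2 * (∫ u in (0:ℝ)..s, f u) * f s
      = (∫ s in (0:ℝ)..t, f s) ^ 2 := by
    have e : (fun s => 2 * (∫ u in (0:ℝ)..s, f u) * f s)
        = fun s => 2 * (f s * ∫ u in (0:ℝ)..s, f u) := by
      funext s; ring
    rw [e, intervalIntegral.integral_const_mul, ← primitive_sq_key hf ht]
  rw [hsplit, h1, h2]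
  ring


/-- Bundled gradient-flow context. -/
structure GF (d n k : ℕ) where
  x : Fin n → Fin d → ℝ
  y : Fin n → ℝ
  l : ℝ → ℝ
  w : ℝ → Fin k → Fin d → ℝ
  a : ℝ → Fin k → ℝ
  w' : ℝ → Fin k → Fin d → ℝ
  a' : ℝ → Fin k → ℝ
  hy : ∀ i, y i = 1 ∨ y i = -1
  hsep1 : ∀ i i', y i = y i' → 0 < dotp (x i) (x i')
  hsep2 : ∀ i i', y i ≠ y i' → dotp (x i) (x i') ≤ 0
  hl : (l = fun u => Real.exp (-u)) ∨ (l = fun u => Real.log (1 + Real.exp (-u)))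
  hwInt : ∀ j ic t, IntervalIntegrable (fun s => w' s j ic) volume 0 t
  haInt : ∀ j t, IntervalIntegrable (fun s => a' s j) volume 0 t
  hwFTC : ∀ t j ic, w t j ic = w 0 j ic + ∫ s in (0:ℝ)..t, w' s j ic
  haFTC : ∀ t j, a t j = a 0 j + ∫ s in (0:ℝ)..t, a' s j
  hbal : ∀ j, |a 0 j| = norm2 (w 0 j)
  hODE : ∀ᵐ t ∂(volume.restrict (Set.Ici (0:ℝ))),
      ∃ σ : Fin n → Fin k → ℝ,
        (∀ i j, 0 ≤ σ i j ∧ σ i j ≤ 1) ∧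
        (∀ i j, dotp (w t j) (x i) < 0 → σ i j = 0) ∧
        (∀ i j, 0 < dotp (w t j) (x i) → σ i j = 1) ∧
        (∀ j ic, w' t j ic =
          -∑ i, deriv l (y i * net (w t) (a t) (x i)) * y i * a t j * σ i j * x i ic) ∧
        (∀ j, a' t j =
          -∑ i, deriv l (y i * net (w t) (a t) (x i)) * y i * relu (dotp (w t j) (x i)))

namespace GF

variable {d n k : ℕ} (C : GF d n k)

/-- neuron/example dot products along the flow. -/
noncomputable def hf (j : Fin k) (i : Fin n) : ℝ → ℝ := fun t => dotp (C.w t j) (C.x i)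
/-- their "derivatives". -/
noncomputable def Df (j : Fin k) (i : Fin n) : ℝ → ℝ := fun t => dotp (C.w' t j) (C.x i)
/-- margins. -/
noncomputable def gf (i : Fin n) : ℝ → ℝ := fun t => C.y i * net (C.w t) (C.a t) (C.x i)
/-- negated loss derivatives ("residuals"). -/
noncomputable def rf (i : Fin n) : ℝ → ℝ := fun t => -(deriv C.l (C.gf i t))

/-- the instantaneous ODE conditions. -/
def Good (t : ℝ) : Prop :=
  ∃ σ : Fin n → Fin k → ℝ,
    (∀ i j, 0 ≤ σ i j ∧ σ i j ≤ 1) ∧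
    (∀ i j, dotp (C.w t j) (C.x i) < 0 → σ i j = 0) ∧
    (∀ i j, 0 < dotp (C.w t j) (C.x i) → σ i j = 1) ∧
    (∀ j ic, C.w' t j ic =
      -∑ i, deriv C.l (C.y i * net (C.w t) (C.a t) (C.x i)) * C.y i * C.a t j * σ i j * C.x i ic) ∧
    (∀ j, C.a' t j =
      -∑ i, deriv C.l (C.y i * net (C.w t) (C.a t) (C.x i)) * C.y i * relu (dotp (C.w t j) (C.x i)))

lemma good_ae : ∀ᵐ t ∂(volume.restrict (Set.Ici (0:ℝ))), C.Good t := C.hODE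

lemma good_ae' : ∀ᵐ t ∂(volume : Measure ℝ), t ∈ Set.Ici (0:ℝ) → C.Good t :=
  (ae_restrict_iff' measurableSet_Ici).mp C.good_ae

lemma wInt' (j : Fin k) (ic : Fin d) (t₁ t₂ : ℝ) :
    IntervalIntegrable (fun s => C.w' s j ic) volume t₁ t₂ :=
  (C.hwInt j ic t₁).symm.trans (C.hwInt j ic t₂)

lemma aInt' (j : Fin k) (t₁ t₂ : ℝ) :
    IntervalIntegrable (fun s => C.a' s j) volume t₁ t₂ :=
  (C.haInt j t₁).symm.trans (C.haInt j t₂)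

lemma cont_w (j : Fin k) (ic : Fin d) : Continuous fun t => C.w t j ic := by
  have e : (fun t => C.w t j ic) = fun t => C.w 0 j ic + ∫ s in (0:ℝ)..t, C.w' s j ic :=
    funext fun t => C.hwFTC t j ic
  rw [e]
  exact continuous_const.add (intervalIntegral.continuous_primitive (C.wInt' j ic) 0)

lemma cont_a (j : Fin k) : Continuous fun t => C.a t j := by
  have e : (fun t => C.a t j) = fun t => C.a 0 j + ∫ s in (0:ℝ)..t, C.a' s j :=
    funext fun t => C.haFTC t j
  rw [e]
  exact continuous_const.add (intervalIntegral.continuous_primitive (C.aInt' j) 0)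

lemma cont_hf (j : Fin k) (i : Fin n) : Continuous (C.hf j i) := by
  unfold hf dotp
  exact continuous_finset_sum _ fun ic _ => (C.cont_w j ic).mul continuous_const

lemma cont_gf (i : Fin n) : Continuous (C.gf i) := by
  unfold gf net
  apply Continuous.mul continuous_const
  apply continuous_finset_sum _ fun j _ => ?_
  exact (C.cont_a j).mul ((C.cont_hf j i).max continuous_const)

lemma cont_rf (i : Fin n) : Continuous (C.rf i) := by
  unfold rf
  exact ((loss_cont_deriv C.hl).comp (C.cont_gf i)).neg

lemma rf_pos (i : Fin n) (t : ℝ) : 0 < C.rf i t := loss_deriv_neg C.hl _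

lemma rfInt (i : Fin n) (t₁ t₂ : ℝ) : IntervalIntegrable (C.rf i) volume t₁ t₂ :=
  (C.cont_rf i).intervalIntegrable _ _

lemma DfInt (j : Fin k) (i : Fin n) (t₁ t₂ : ℝ) :
    IntervalIntegrable (C.Df j i) volume t₁ t₂ := by
  have h1 := IntervalIntegrable.sum (μ := volume) (a := t₁) (b := t₂) Finset.univ
    (f := fun (ic : Fin d) => fun s => C.w' s j ic * C.x i ic)
    (fun ic _ => (C.wInt' j ic t₁ t₂).mul_const _)
  have e2 : (∑ ic : Fin d, fun s => C.w' s j ic * C.x i ic)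
      = fun s => ∑ ic : Fin d, C.w' s j ic * C.x i ic := by
    funext s; simp
  rw [e2] at h1
  exact h1

lemma hf_ftc (j : Fin k) (i : Fin n) (t : ℝ) :
    C.hf j i t = C.hf j i 0 + ∫ s in (0:ℝ)..t, C.Df j i s := by
  have e : ∫ s in (0:ℝ)..t, C.Df j i s = ∑ ic, (∫ s in (0:ℝ)..t, C.w' s j ic) * C.x i ic := by
    calc ∫ s in (0:ℝ)..t, C.Df j i s
        = ∫ s in (0:ℝ)..t, ∑ ic, C.w' s j ic * C.x i ic := by
          apply intervalIntegral.integral_congr; intro s _; rfl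
      _ = ∑ ic, ∫ s in (0:ℝ)..t, C.w' s j ic * C.x i ic :=
          intervalIntegral.integral_finset_sum (fun ic _ => (C.hwInt j ic t).mul_const _)
      _ = ∑ ic, (∫ s in (0:ℝ)..t, C.w' s j ic) * C.x i ic := by
          apply Finset.sum_congr rfl; intro ic _
          exact intervalIntegral.integral_mul_const _ _
  unfold hf dotp
  rw [e, ← Finset.sum_add_distrib]
  apply Finset.sum_congr rfl
  intro ic _
  rw [C.hwFTC t j ic, add_mul]

lemma hf_sub (j : Fin k) (i : Fin n) (t₁ t₂ : ℝ) :
    C.hf j i t₂ - C.hf j i t₁ = ∫ s in t₁..t₂, C.Df j i s := by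
  rw [C.hf_ftc j i t₂, C.hf_ftc j i t₁,
    ← intervalIntegral.integral_interval_sub_left (C.DfInt j i 0 t₂) (C.DfInt j i 0 t₁)]
  ring

lemma a_sub (j : Fin k) (t₁ t₂ : ℝ) :
    C.a t₂ j - C.a t₁ j = ∫ s in t₁..t₂, C.a' s j := by
  rw [C.haFTC t₂ j, C.haFTC t₁ j,
    ← intervalIntegral.integral_interval_sub_left (C.aInt' j 0 t₂) (C.aInt' j 0 t₁)]
  ring

section Pointwise

variable {t : ℝ}

lemma y_cases (s : ℝ) (hs : s = 1 ∨ s = -1) (i' : Fin n) : C.y i' = s ∨ C.y i' = -s := by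
  rcases C.hy i' with h | h <;> rcases hs with rfl | rfl <;> simp [h]

lemma sign_ne (s : ℝ) (hs : s = 1 ∨ s = -1) : -s ≠ s := by
  rcases hs with rfl | rfl <;> norm_num

/-- At a good time, the derivative of a neuron/example dot product decomposes. -/
lemma good_D_bounds (hG : C.Good t) (s : ℝ) (hs : s = 1 ∨ s = -1) (j : Fin k) (i : Fin n)
    (hyi : C.y i = s) (hb : 0 ≤ s * C.a t j) :
    0 ≤ C.Df j i t ∧
      (∀ istar : Fin n, C.y istar = s → 0 < C.hf j istar t →
        (s * C.a t j) * (C.rf istar t * dotp (C.x istar) (C.x i)) ≤ C.Df j i t) := by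
  obtain ⟨σ, hσ01, hσ0, hσ1, hw', _⟩ := hG
  have hss : s * s = 1 := by rcases hs with rfl | rfl <;> norm_num
  have hD : C.Df j i t
      = ∑ i', (C.rf i' t * (C.y i' * C.a t j) * σ i' j) * dotp (C.x i') (C.x i) := by
    have e1 : ∀ ic, C.w' t j ic * C.x i ic
        = ∑ i', (C.rf i' t * (C.y i' * C.a t j) * σ i' j) * (C.x i' ic * C.x i ic) := by
      intro ic
      rw [hw' j ic, neg_mul, Finset.sum_mul, ← Finset.sum_neg_distrib]
      apply Finset.sum_congr rfl
      intro i' _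
      unfold rf gf
      ring
    calc C.Df j i t = ∑ ic, C.w' t j ic * C.x i ic := rfl
      _ = ∑ ic, ∑ i', (C.rf i' t * (C.y i' * C.a t j) * σ i' j) * (C.x i' ic * C.x i ic) :=
          Finset.sum_congr rfl fun ic _ => e1 ic
      _ = ∑ i', ∑ ic, (C.rf i' t * (C.y i' * C.a t j) * σ i' j) * (C.x i' ic * C.x i ic) :=
          Finset.sum_comm
      _ = ∑ i', (C.rf i' t * (C.y i' * C.a t j) * σ i' j) * dotp (C.x i') (C.x i) := by
          apply Finset.sum_congr rfl
          intro i' _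
          rw [dotp, Finset.mul_sum]
  have hterm : ∀ i', 0 ≤ (C.rf i' t * (C.y i' * C.a t j) * σ i' j) * dotp (C.x i') (C.x i) := by
    intro i'
    have hr := (C.rf_pos i' t).le
    have hσ := (hσ01 i' j).1
    rcases C.y_cases s hs i' with hcase | hcase
    · have hd : 0 < dotp (C.x i') (C.x i) := C.hsep1 i' i (by rw [hcase, hyi])
      have hya : C.y i' * C.a t j = s * C.a t j := by rw [hcase]
      rw [hya]
      exact mul_nonneg (mul_nonneg (mul_nonneg hr hb) hσ) hd.le
    · have hd : dotp (C.x i') (C.x i) ≤ 0 := C.hsep2 i' i (by rw [hcase, hyi]; exact sign_ne s hs)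
      have hya : C.y i' * C.a t j = -(s * C.a t j) := by rw [hcase]; ring
      rw [hya]
      have h1 : 0 ≤ C.rf i' t * (s * C.a t j) * σ i' j :=
        mul_nonneg (mul_nonneg hr hb) hσ
      nlinarith
  constructor
  · rw [hD]; exact Finset.sum_nonneg fun i' _ => hterm i'
  · intro istar hystar hhstar
    have hmem : istar ∈ (Finset.univ : Finset (Fin n)) := Finset.mem_univ _
    have hsingle := Finset.single_le_sum (f := fun i' =>
      (C.rf i' t * (C.y i' * C.a t j) * σ i' j) * dotp (C.x i') (C.x i))
      (fun i' _ => hterm i') hmem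
    rw [hD]
    refine le_trans (le_of_eq ?_) hsingle
    have hσs : σ istar j = 1 := hσ1 istar j hhstar
    show (s * C.a t j) * (C.rf istar t * dotp (C.x istar) (C.x i))
        = (C.rf istar t * (C.y istar * C.a t j) * σ istar j) * dotp (C.x istar) (C.x i)
    rw [hσs, hystar]
    ring

lemma good_a'_abs (hG : C.Good t) (j : Fin k) :
    |C.a' t j| ≤ ∑ i', C.rf i' t * relu (C.hf j i' t) := by
  obtain ⟨σ, hσ01, hσ0, hσ1, hw', ha'⟩ := hG
  have e : C.a' t j = ∑ i', C.rf i' t * C.y i' * relu (C.hf j i' t) := by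
    rw [ha' j, ← Finset.sum_neg_distrib]
    apply Finset.sum_congr rfl
    intro i' _
    unfold rf gf hf
    ring
  rw [e]
  refine (Finset.abs_sum_le_sum_abs _ _).trans (Finset.sum_le_sum fun i' _ => ?_)
  have hy1 : |C.y i'| = 1 := by rcases C.hy i' with h | h <;> simp [h]
  rw [abs_mul, abs_mul, hy1, mul_one,
    abs_of_nonneg (C.rf_pos i' t).le, abs_of_nonneg (relu_nonneg _)]

lemma good_a'_signed (hG : C.Good t) (s : ℝ) (hs : s = 1 ∨ s = -1) (j : Fin k) :
    s * C.a' t j ≤ ∑ i', (if C.y i' = s then C.rf i' t * relu (C.hf j i' t) else 0) := by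
  obtain ⟨σ, hσ01, hσ0, hσ1, hw', ha'⟩ := hG
  have hss : s * s = 1 := by rcases hs with rfl | rfl <;> norm_num
  have e : s * C.a' t j = ∑ i', C.rf i' t * (s * C.y i') * relu (C.hf j i' t) := by
    rw [ha' j, ← Finset.sum_neg_distrib, Finset.mul_sum]
    apply Finset.sum_congr rfl
    intro i' _
    unfold rf gf hf
    ring
  rw [e]
  apply Finset.sum_le_sum
  intro i' _
  by_cases hcase : C.y i' = s
  · rw [if_pos hcase, hcase, hss, mul_one]
  · rw [if_neg hcase]
    have hy' : C.y i' = -s := (C.y_cases s hs i').resolve_left hcase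
    have : s * C.y i' = -1 := by rw [hy']; rcases hs with rfl | rfl <;> norm_num
    rw [this]
    have := mul_nonneg (C.rf_pos i' t).le (relu_nonneg (C.hf j i' t))
    nlinarith

end Pointwise

section Balance

lemma dotp_comm {m : ℕ} (u v : Fin m → ℝ) : dotp u v = dotp v u := by
  unfold dotp; exact Finset.sum_congr rfl fun i _ => mul_comm _ _

lemma good_balance_integrand {t : ℝ} (hG : C.Good t) (j : Fin k) :
    ∑ ic, C.w' t j ic * C.w t j ic = C.a' t j * C.a t j := by
  obtain ⟨σ, hσ01, hσ0, hσ1, hw', ha'⟩ := hG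
  have hσh : ∀ i', σ i' j * dotp (C.w t j) (C.x i') = relu (dotp (C.w t j) (C.x i')) := by
    intro i'
    rcases lt_trichotomy (dotp (C.w t j) (C.x i')) 0 with h | h | h
    · rw [hσ0 i' j h]
      unfold relu
      rw [max_eq_right h.le]
      ring
    · rw [h]
      unfold relu
      simp
    · rw [hσ1 i' j h]
      unfold relu
      rw [max_eq_left h.le]
      ring
  have hL : ∑ ic, C.w' t j ic * C.w t j ic
      = ∑ i', (-(deriv C.l (C.y i' * net (C.w t) (C.a t) (C.x i'))) * C.y i' * C.a t j)
          * (σ i' j * dotp (C.w t j) (C.x i')) := by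
    have e1 : ∀ ic, C.w' t j ic * C.w t j ic
        = ∑ i', (-(deriv C.l (C.y i' * net (C.w t) (C.a t) (C.x i'))) * C.y i' * C.a t j * σ i' j)
            * (C.x i' ic * C.w t j ic) := by
      intro ic
      rw [hw' j ic, neg_mul, Finset.sum_mul, ← Finset.sum_neg_distrib]
      apply Finset.sum_congr rfl
      intro i' _
      ring
    calc ∑ ic, C.w' t j ic * C.w t j ic
        = ∑ ic, ∑ i', (-(deriv C.l (C.y i' * net (C.w t) (C.a t) (C.x i'))) * C.y i' * C.a t j * σ i' j)
            * (C.x i' ic * C.w t j ic) := Finset.sum_congr rfl fun ic _ => e1 ic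
      _ = ∑ i', ∑ ic, (-(deriv C.l (C.y i' * net (C.w t) (C.a t) (C.x i'))) * C.y i' * C.a t j * σ i' j)
            * (C.x i' ic * C.w t j ic) := Finset.sum_comm
      _ = _ := by
          apply Finset.sum_congr rfl
          intro i' _
          rw [← Finset.mul_sum]
          have : ∑ ic, C.x i' ic * C.w t j ic = dotp (C.w t j) (C.x i') := by
            rw [dotp_comm]; rfl
          rw [this]
          ring
  rw [hL, ha' j, neg_mul, Finset.sum_mul, ← Finset.sum_neg_distrib]
  apply Finset.sum_congr rfl
  intro i' _
  rw [← hσh i']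
  ring

lemma balance (j : Fin k) {t : ℝ} (ht : 0 ≤ t) : (C.a t j) ^ 2 = ∑ ic, (C.w t j ic) ^ 2 := by
  have hsqa : (C.a t j) ^ 2 = (C.a 0 j) ^ 2 + ∫ s in (0:ℝ)..t, 2 * (C.a s j) * (C.a' s j) := by
    have h1 := primitive_sq (C.haInt j) (C.a 0 j) ht
    rw [← C.haFTC t j] at h1
    rw [h1]
    congr 1
    apply intervalIntegral.integral_congr
    intro s _
    dsimp only
    rw [← C.haFTC s j]
  have hsqw : ∀ ic, (C.w t j ic) ^ 2
      = (C.w 0 j ic) ^ 2 + ∫ s in (0:ℝ)..t, 2 * (C.w s j ic) * (C.w' s j ic) := by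
    intro ic
    have h1 := primitive_sq (C.hwInt j ic) (C.w 0 j ic) ht
    rw [← C.hwFTC t j ic] at h1
    rw [h1]
    congr 1
    apply intervalIntegral.integral_congr
    intro s _
    dsimp only
    rw [← C.hwFTC s j ic]
  have hIa : IntervalIntegrable (fun s => 2 * (C.a s j) * (C.a' s j)) volume 0 t := by
    apply IntervalIntegrable.continuousOn_mul (C.haInt j t)
    exact (continuous_const.mul (C.cont_a j)).continuousOn
  have hIw : ∀ ic, IntervalIntegrable (fun s => 2 * (C.w s j ic) * (C.w' s j ic)) volume 0 t := by
    intro ic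
    apply IntervalIntegrable.continuousOn_mul (C.hwInt j ic t)
    exact (continuous_const.mul (C.cont_w j ic)).continuousOn
  have hsum : ∑ ic, (C.w t j ic) ^ 2
      = ∑ ic, (C.w 0 j ic) ^ 2
        + ∫ s in (0:ℝ)..t, ∑ ic, 2 * (C.w s j ic) * (C.w' s j ic) := by
    rw [intervalIntegral.integral_finset_sum (fun ic _ => hIw ic), ← Finset.sum_add_distrib]
    exact Finset.sum_congr rfl fun ic _ => hsqw ic
  have hinit : (C.a 0 j) ^ 2 = ∑ ic, (C.w 0 j ic) ^ 2 := by
    have := C.hbal j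
    have h2 : |C.a 0 j| ^ 2 = (norm2 (C.w 0 j)) ^ 2 := by rw [this]
    rw [sq_abs, norm2_sq] at h2
    exact h2
  have hzero : ∫ s in (0:ℝ)..t,
      (2 * (C.a s j) * (C.a' s j) - ∑ ic, 2 * (C.w s j ic) * (C.w' s j ic)) = 0 := by
    have hae : ∀ᵐ s ∂(volume : Measure ℝ), s ∈ Set.uIoc (0:ℝ) t →
        (2 * (C.a s j) * (C.a' s j) - ∑ ic, 2 * (C.w s j ic) * (C.w' s j ic)) = (0:ℝ) := by
      filter_upwards [C.good_ae'] with s hG hmem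
      have hs0 : (0:ℝ) ≤ s := by
        rcases Set.mem_uIoc.mp hmem with h | h
        · linarith [h.1]
        · linarith [h.1, h.2, ht]
      have hGs := hG hs0
      have hb := C.good_balance_integrand hGs j
      have e : ∑ ic, 2 * (C.w s j ic) * (C.w' s j ic)
          = 2 * ∑ ic, C.w' s j ic * C.w s j ic := by
        rw [Finset.mul_sum]
        exact Finset.sum_congr rfl fun ic _ => by ring
      rw [e, hb]
      ring
    calc ∫ s in (0:ℝ)..t,
        (2 * (C.a s j) * (C.a' s j) - ∑ ic, 2 * (C.w s j ic) * (C.w' s j ic))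
        = ∫ s in (0:ℝ)..t, (0:ℝ) := intervalIntegral.integral_congr_ae hae
      _ = 0 := intervalIntegral.integral_zero
  have hIsw : IntervalIntegrable (fun s => ∑ ic, 2 * (C.w s j ic) * (C.w' s j ic)) volume 0 t := by
    have h1 := IntervalIntegrable.sum (μ := volume) (a := (0:ℝ)) (b := t) Finset.univ
      (f := fun (ic : Fin d) => fun s => 2 * (C.w s j ic) * (C.w' s j ic)) (fun ic _ => hIw ic)
    have e2 : (∑ ic : Fin d, fun s => 2 * (C.w s j ic) * (C.w' s j ic))
        = fun s => ∑ ic : Fin d, 2 * (C.w s j ic) * (C.w' s j ic) := by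
      funext s; simp
    rw [e2] at h1
    exact h1
  have hdiff := intervalIntegral.integral_sub hIa hIsw
  rw [hsqa, hsum, hinit]
  have : (∫ s in (0:ℝ)..t, 2 * (C.a s j) * (C.a' s j))
      = ∫ s in (0:ℝ)..t, ∑ ic, 2 * (C.w s j ic) * (C.w' s j ic) := by
    have := hzero
    rw [hdiff] at this
    linarith
  rw [this]

lemma norm_w (j : Fin k) {t : ℝ} (ht : 0 ≤ t) : norm2 (C.w t j) = |C.a t j| := by
  unfold norm2
  rw [← C.balance j ht, Real.sqrt_sq_eq_abs]

lemma h_le (j : Fin k) (i : Fin n) {t : ℝ} (ht : 0 ≤ t) :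
    C.hf j i t ≤ |C.a t j| * norm2 (C.x i) := by
  have := dotp_le_norm2 (C.w t j) (C.x i)
  rw [C.norm_w j ht] at this
  exact this

lemma relu_h_le (j : Fin k) (i : Fin n) {t : ℝ} (ht : 0 ≤ t) :
    relu (C.hf j i t) ≤ |C.a t j| * norm2 (C.x i) :=
  max_le (C.h_le j i ht) (mul_nonneg (abs_nonneg _) (norm2_nonneg _))

end Balance

section Signs

lemma aa'Int (j : Fin k) (t₁ t₂ : ℝ) :
    IntervalIntegrable (fun s => 2 * (C.a s j) * (C.a' s j)) volume t₁ t₂ := by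
  apply IntervalIntegrable.continuousOn_mul (C.aInt' j t₁ t₂)
  exact (continuous_const.mul (C.cont_a j)).continuousOn

lemma a_sq_ftc (j : Fin k) {t : ℝ} (ht : 0 ≤ t) :
    (C.a t j) ^ 2 = (C.a 0 j) ^ 2 + ∫ s in (0:ℝ)..t, 2 * (C.a s j) * (C.a' s j) := by
  have h1 := primitive_sq (C.haInt j) (C.a 0 j) ht
  rw [← C.haFTC t j] at h1
  rw [h1]
  congr 1
  apply intervalIntegral.integral_congr
  intro s _
  dsimp only
  rw [← C.haFTC s j]

lemma a_sq_sub (j : Fin k) {t₀ t : ℝ} (h0 : 0 ≤ t₀) (ht : t₀ ≤ t) :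
    (C.a t j) ^ 2 - (C.a t₀ j) ^ 2 = ∫ s in t₀..t, 2 * (C.a s j) * (C.a' s j) := by
  rw [C.a_sq_ftc j (h0.trans ht), C.a_sq_ftc j h0,
    ← intervalIntegral.integral_interval_sub_left (C.aa'Int j 0 t) (C.aa'Int j 0 t₀)]
  ring

/-- once a neuron dies it stays dead. -/
lemma absorb (j : Fin k) {t₀ : ℝ} (h0 : 0 ≤ t₀) (hz : C.a t₀ j = 0) :
    ∀ t, t₀ ≤ t → C.a t j = 0 := by
  set c : ℝ → ℝ := fun t => 2 * ∑ i, C.rf i t * norm2 (C.x i) with hc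
  have hccont : Continuous c := by
    apply continuous_const.mul
    exact continuous_finset_sum _ fun i _ => (C.cont_rf i).mul continuous_const
  have hcnn : ∀ t, 0 ≤ c t := by
    intro t
    apply mul_nonneg (by norm_num)
    exact Finset.sum_nonneg fun i _ => mul_nonneg (C.rf_pos i t).le (norm2_nonneg _)
  have hK : ∀ t, t₀ ≤ t → (C.a t j) ^ 2 ≤ 0 + ∫ s in t₀..t, c s * (C.a s j) ^ 2 := by
    intro t ht
    have h1 : (C.a t j) ^ 2 = ∫ s in t₀..t, 2 * (C.a s j) * (C.a' s j) := by
      have := C.a_sq_sub j h0 ht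
      rw [hz] at this
      simpa using this
    rw [h1, zero_add]
    apply intervalIntegral.integral_mono_ae_restrict ht (C.aa'Int j t₀ t)
      ((hccont.mul ((C.cont_a j).pow 2)).intervalIntegrable _ _)
    have hae : ∀ᵐ s ∂(volume.restrict (Set.Icc t₀ t)), s ∈ Set.Ici (0:ℝ) → C.Good s :=
      ae_restrict_of_ae C.good_ae'
    filter_upwards [hae, ae_restrict_mem measurableSet_Icc] with s hGmem hmem
    have hs0 : (0:ℝ) ≤ s := h0.trans hmem.1
    have hG := hGmem hs0
    have habs := C.good_a'_abs hG j
    have hrelu : ∀ i, relu (C.hf j i s) ≤ |C.a s j| * norm2 (C.x i) :=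
      fun i => C.relu_h_le j i hs0
    have h2 : |C.a' s j| ≤ (∑ i, C.rf i s * norm2 (C.x i)) * |C.a s j| := by
      refine habs.trans ?_
      rw [Finset.sum_mul]
      apply Finset.sum_le_sum
      intro i _
      have := hrelu i
      have hr := (C.rf_pos i s).le
      nlinarith
    calc 2 * (C.a s j) * (C.a' s j) ≤ |2 * (C.a s j) * (C.a' s j)| := le_abs_self _
      _ = 2 * |C.a s j| * |C.a' s j| := by rw [abs_mul, abs_mul]; simp
      _ ≤ 2 * |C.a s j| * ((∑ i, C.rf i s * norm2 (C.x i)) * |C.a s j|) := by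
          apply mul_le_mul_of_nonneg_left h2 (by positivity)
      _ = c s * (C.a s j) ^ 2 := by
          rw [hc]
          dsimp only
          rw [← sq_abs (C.a s j)]
          ring
  have := gronwall_integral (u := fun t => (C.a t j) ^ 2) ((C.cont_a j).pow 2) hccont
    (fun t _ => hcnn t) hK
  intro t ht
  have h3 := this t ht
  rw [zero_mul] at h3
  have h4 : 0 ≤ (C.a t j) ^ 2 := sq_nonneg _
  have h5 : (C.a t j) ^ 2 = 0 := le_antisymm h3 h4
  exact pow_eq_zero_iff (by norm_num) |>.mp h5

/-- everywhere-positivity of `s · a_j` on `[0, ∞)`. -/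
def PosOn (s : ℝ) (j : Fin k) : Prop := ∀ t, 0 ≤ t → 0 < s * C.a t j

lemma mono_h' (s : ℝ) (hs : s = 1 ∨ s = -1) (i : Fin n) (hyi : C.y i = s) (j : Fin k)
    {t₁ t₂ : ℝ} (h1 : 0 ≤ t₁) (h12 : t₁ ≤ t₂)
    (hpos : ∀ t ∈ Set.Icc t₁ t₂, 0 ≤ s * C.a t j) :
    C.hf j i t₁ ≤ C.hf j i t₂ := by
  have hsub := C.hf_sub j i t₁ t₂
  have hnn : 0 ≤ ∫ s' in t₁..t₂, C.Df j i s' := by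
    apply intervalIntegral.integral_nonneg_of_ae_restrict h12
    have hae : ∀ᵐ s' ∂(volume.restrict (Set.Icc t₁ t₂)), s' ∈ Set.Ici (0:ℝ) → C.Good s' :=
      ae_restrict_of_ae C.good_ae'
    filter_upwards [hae, ae_restrict_mem measurableSet_Icc] with s' hGmem hmem
    have hs0 : (0:ℝ) ≤ s' := h1.trans hmem.1
    exact (C.good_D_bounds (hGmem hs0) s hs j i hyi (hpos s' hmem)).1
  linarith

lemma pos_of_init (s : ℝ) (hs : s = 1 ∨ s = -1) (j : Fin k) (i₀ : Fin n)
    (hyi₀ : C.y i₀ = s) (hb0 : 0 < s * C.a 0 j) (hh0 : 0 < C.hf j i₀ 0) :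
    C.PosOn s j := by
  have hs0 : s ≠ 0 := by rcases hs with rfl | rfl <;> norm_num
  by_contra hcon
  unfold PosOn at hcon
  push_neg at hcon
  obtain ⟨t₁, ht₁, hle⟩ := hcon
  set f : ℝ → ℝ := fun t => s * C.a t j with hfdef
  have hfc : Continuous f := continuous_const.mul (C.cont_a j)
  set Z : Set ℝ := f ⁻¹' {0} ∩ Set.Icc 0 t₁ with hZ
  have hZc : IsClosed Z := (isClosed_singleton.preimage hfc).inter isClosed_Icc
  have hZne : Z.Nonempty := by
    have h0 : (0:ℝ) ∈ Set.Icc (f t₁) (f 0) := ⟨hle, hb0.le⟩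
    obtain ⟨τ, hτmem, hτ⟩ := intermediate_value_Icc' ht₁ hfc.continuousOn h0
    exact ⟨τ, hτ, hτmem⟩
  have hZbd : BddBelow Z := ⟨0, fun z hz => hz.2.1⟩
  set τ₀ := sInf Z with hτ₀def
  have hτ₀ : τ₀ ∈ Z := hZc.csInf_mem hZne hZbd
  have hτ₀0 : 0 ≤ τ₀ := hτ₀.2.1
  have hτ₀z : f τ₀ = 0 := hτ₀.1
  have hnn : ∀ t ∈ Set.Icc 0 τ₀, 0 ≤ f t := by
    intro t htmem
    by_contra hlt
    push_neg at hlt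
    have h0 : (0:ℝ) ∈ Set.Icc (f t) (f 0) := ⟨hlt.le, hb0.le⟩
    obtain ⟨τ', hτ'mem, hτ'⟩ := intermediate_value_Icc' htmem.1 hfc.continuousOn h0
    have hτ'Z : τ' ∈ Z := ⟨hτ', hτ'mem.1, hτ'mem.2.trans (htmem.2.trans hτ₀.2.2)⟩
    have : τ₀ ≤ τ' := csInf_le hZbd hτ'Z
    have htne : t ≠ τ₀ := fun he => by rw [he, hτ₀z] at hlt; exact lt_irrefl _ hlt
    have : τ' ≤ t := hτ'mem.2
    have : t < τ₀ := lt_of_le_of_ne htmem.2 htne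
    linarith
  have hmono := C.mono_h' s hs i₀ hyi₀ j le_rfl hτ₀0 hnn
  have haz : C.a τ₀ j = 0 := by
    have := hτ₀z
    rw [hfdef] at this
    simp only at this
    rcases mul_eq_zero.mp this with h | h
    · exact absurd h hs0
    · exact h
  have hub := C.h_le j i₀ hτ₀0
  rw [haz] at hub
  simp at hub
  linarith

lemma pos_of_frequently (s : ℝ) (hs : s = 1 ∨ s = -1) (j : Fin k)
    (hub : ∀ T, ∃ t, T ≤ t ∧ 0 ≤ t ∧ 0 < s * C.a t j) :
    C.PosOn s j := by
  have hs0 : s ≠ 0 := by rcases hs with rfl | rfl <;> norm_num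
  intro t ht
  by_contra hle
  push_neg at hle
  obtain ⟨t₂, ht₂, ht₂0, hpos⟩ := hub t
  rcases eq_or_lt_of_le hle with heq | hlt
  · have haz : C.a t j = 0 := by
      rcases mul_eq_zero.mp heq with h | h
      · exact absurd h hs0
      · exact h
    have := C.absorb j ht haz t₂ ht₂
    rw [this] at hpos
    simp at hpos
  · have hfc : Continuous fun t => s * C.a t j := continuous_const.mul (C.cont_a j)
    have h0 : (0:ℝ) ∈ Set.Icc (s * C.a t j) (s * C.a t₂ j) := ⟨hlt.le, hpos.le⟩
    obtain ⟨τ, hτmem, hτ⟩ := intermediate_value_Icc ht₂ hfc.continuousOn h0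
    have haz : C.a τ j = 0 := by
      rcases mul_eq_zero.mp hτ with h | h
      · exact absurd h hs0
      · exact h
    have := C.absorb j (ht.trans hτmem.1) haz t₂ hτmem.2
    rw [this] at hpos
    simp at hpos

lemma mono_of_posOn (s : ℝ) (hs : s = 1 ∨ s = -1) (i : Fin n) (hyi : C.y i = s) (j : Fin k)
    (hP : C.PosOn s j) {t₁ t₂ : ℝ} (h1 : 0 ≤ t₁) (h12 : t₁ ≤ t₂) :
    C.hf j i t₁ ≤ C.hf j i t₂ :=
  C.mono_h' s hs i hyi j h1 h12 fun t htmem => (hP t (h1.trans htmem.1)).le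

end Signs

section Quantitative

lemma norm2_x_pos (i : Fin n) : 0 < norm2 (C.x i) := by
  have h1 : 0 < dotp (C.x i) (C.x i) := C.hsep1 i i rfl
  have h2 : dotp (C.x i) (C.x i) = (norm2 (C.x i)) ^ 2 := by
    rw [norm2_sq]
    exact Finset.sum_congr rfl fun ic _ => (sq (C.x i ic)).symm
  rw [h2] at h1
  have := norm2_nonneg (C.x i)
  nlinarith

lemma abs_sign_eq (s : ℝ) (hs : s = 1 ∨ s = -1) {v : ℝ} (hv : 0 < s * v) : |v| = s * v := by
  rcases hs with rfl | rfl
  · rw [one_mul] at hv ⊢; exact abs_of_pos hv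
  · have : v < 0 := by nlinarith
    rw [abs_of_neg this]; ring

lemma a_lower (s : ℝ) (hs : s = 1 ∨ s = -1) (j : Fin k) (istar : Fin n)
    {t c₀ : ℝ} (ht : 0 ≤ t) (hP : 0 < s * C.a t j) (hm : c₀ ≤ C.hf j istar t) :
    c₀ / norm2 (C.x istar) ≤ s * C.a t j := by
  have hx := C.norm2_x_pos istar
  rw [div_le_iff₀ hx]
  have h1 := C.h_le j istar (t := t) ht
  rw [abs_sign_eq s hs hP] at h1
  linarith

/-- bounded dot product means bounded residual-integral of any margin point. -/
lemma r_int_bdd (s : ℝ) (hs : s = 1 ∨ s = -1) (i : Fin n) (hyi : C.y i = s)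
    (j : Fin k) (istar : Fin n) (hystar : C.y istar = s) (hP : C.PosOn s j)
    {T₀ c₀ H : ℝ} (hT₀ : 0 ≤ T₀) (hc₀ : 0 < c₀)
    (hm : ∀ t, T₀ ≤ t → c₀ ≤ C.hf j istar t)
    (hH : ∀ t, 0 ≤ t → C.hf j i t ≤ H) :
    ∃ M, ∀ t, T₀ ≤ t → ∫ τ in T₀..t, C.rf istar τ ≤ M := by
  set β := c₀ / norm2 (C.x istar) with hβ
  have hβpos : 0 < β := div_pos hc₀ (C.norm2_x_pos istar)
  set δ := dotp (C.x istar) (C.x i) with hδ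
  have hδpos : 0 < δ := C.hsep1 istar i (by rw [hystar, hyi])
  refine ⟨(H - C.hf j i T₀) / (β * δ), fun t ht => ?_⟩
  have hgrow : (β * δ) * ∫ τ in T₀..t, C.rf istar τ ≤ C.hf j i t - C.hf j i T₀ := by
    rw [← intervalIntegral.integral_const_mul]
    rw [C.hf_sub j i T₀ t]
    apply intervalIntegral.integral_mono_ae_restrict ht
      ((continuous_const.mul (C.cont_rf istar)).intervalIntegrable _ _) (C.DfInt j i T₀ t)
    have hae : ∀ᵐ τ ∂(volume.restrict (Set.Icc T₀ t)), τ ∈ Set.Ici (0:ℝ) → C.Good τ :=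
      ae_restrict_of_ae C.good_ae'
    filter_upwards [hae, ae_restrict_mem measurableSet_Icc] with τ hGmem hmem
    have hτ0 : (0:ℝ) ≤ τ := hT₀.trans hmem.1
    have hG := hGmem hτ0
    have hPt := hP τ hτ0
    have hmt := hm τ hmem.1
    have hht : 0 < C.hf j istar τ := lt_of_lt_of_le hc₀ hmt
    have hlow := (C.good_D_bounds hG s hs j i hyi hPt.le).2 istar hystar hht
    have hblow := C.a_lower s hs j istar hτ0 hPt hmt
    have hrd : 0 ≤ C.rf istar τ * δ := mul_nonneg (C.rf_pos istar τ).le hδpos.le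
    calc β * δ * C.rf istar τ = β * (C.rf istar τ * δ) := by ring
      _ ≤ (s * C.a τ j) * (C.rf istar τ * δ) := mul_le_mul_of_nonneg_right hblow hrd
      _ ≤ C.Df j i τ := hlow
  have hub : C.hf j i t - C.hf j i T₀ ≤ H - C.hf j i T₀ := by
    have := hH t (hT₀.trans ht)
    linarith
  rw [le_div_iff₀ (by positivity)]
  nlinarith

lemma g_unbdd (istar : Fin n) {T₀ M : ℝ}
    (hM : ∀ t, T₀ ≤ t → ∫ τ in T₀..t, C.rf istar τ ≤ M) :
    ∀ G T, ∃ t, T ≤ t ∧ 0 ≤ t ∧ G < C.gf istar t := by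
  intro G T
  by_contra hcon
  push_neg at hcon
  obtain ⟨ρ, hρ, hlb⟩ := loss_deriv_lb C.hl G
  set T₁ := max (max T T₀) 0 with hT₁
  have hT₁T : T ≤ T₁ := le_max_of_le_left (le_max_left _ _)
  have hT₁T₀ : T₀ ≤ T₁ := le_max_of_le_left (le_max_right _ _)
  have hT₁0 : (0:ℝ) ≤ T₁ := le_max_right _ _
  have hrlb : ∀ t, T₁ ≤ t → ρ ≤ C.rf istar t := by
    intro t ht
    have hg := hcon t (hT₁T.trans ht) (hT₁0.trans ht)
    exact hlb _ hg
  set q := (M - (∫ τ in T₀..T₁, C.rf istar τ) + 1) / ρ with hq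
  set t₂ := T₁ + max q 0 with ht₂
  have ht₂T₁ : T₁ ≤ t₂ := by
    rw [ht₂]; nlinarith [le_max_right q (0:ℝ)]
  have hint : ∫ τ in T₀..t₂, C.rf istar τ
      = (∫ τ in T₀..T₁, C.rf istar τ) + ∫ τ in T₁..t₂, C.rf istar τ :=
    (intervalIntegral.integral_add_adjacent_intervals
      (C.rfInt istar T₀ T₁) (C.rfInt istar T₁ t₂)).symm
  have hlb2 : ρ * (t₂ - T₁) ≤ ∫ τ in T₁..t₂, C.rf istar τ := by
    have := intervalIntegral.integral_mono_on ht₂T₁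
      (intervalIntegrable_const) (C.rfInt istar T₁ t₂) (fun τ hτ => hrlb τ hτ.1)
    rw [intervalIntegral.integral_const] at this
    rw [mul_comm]
    simpa using this
  have hM2 := hM t₂ (hT₁T₀.trans ht₂T₁)
  rw [hint] at hM2
  -- now: ∫_{T₀}^{T₁} + ρ(t₂ - T₁) ≤ M, and t₂ - T₁ = max q 0 ≥ q
  have hqle : q ≤ t₂ - T₁ := by rw [ht₂]; simp [le_max_left]
  have : ρ * q ≤ ρ * (t₂ - T₁) := mul_le_mul_of_nonneg_left hqle hρ.le
  have hρq : ρ * q = M - (∫ τ in T₀..T₁, C.rf istar τ) + 1 := by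
    rw [hq]; field_simp
  nlinarith

lemma pigeon (s : ℝ) (i_star : Fin n) (hystar : C.y i_star = s)
    (hg : ∀ G T, ∃ t, T ≤ t ∧ 0 ≤ t ∧ G < C.gf i_star t) (j₀ : Fin k) :
    ∃ j₂, ∀ G T, ∃ t, T ≤ t ∧ 0 ≤ t ∧ G < (s * C.a t j₂) * relu (C.hf j₂ i_star t) := by
  have hdecomp : ∀ t, C.gf i_star t = ∑ j, (s * C.a t j) * relu (C.hf j i_star t) := by
    intro t
    unfold gf net hf
    rw [hystar, Finset.mul_sum]
    exact Finset.sum_congr rfl fun j _ => by ring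
  by_contra hcon
  push_neg at hcon
  choose Gj Tj hGT using hcon
  have hne : (Finset.univ : Finset (Fin k)).Nonempty := ⟨j₀, Finset.mem_univ _⟩
  set T' := Finset.univ.sup' hne Tj with hT'
  obtain ⟨t, ht1, ht2, ht3⟩ := hg (∑ j, Gj j) T'
  have hbound : C.gf i_star t ≤ ∑ j, Gj j := by
    rw [hdecomp t]
    apply Finset.sum_le_sum
    intro j _
    exact hGT j t ((Finset.le_sup' Tj (Finset.mem_univ j)).trans ht1) ht2
  linarith

lemma bdd_above_of_not_tendsto (j : Fin k) (i : Fin n)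
    (hmono : ∀ t₁ t₂, 0 ≤ t₁ → t₁ ≤ t₂ → C.hf j i t₁ ≤ C.hf j i t₂)
    (hnt : ¬ Tendsto (C.hf j i) atTop atTop) :
    ∃ H, ∀ t, 0 ≤ t → C.hf j i t ≤ H := by
  by_contra hcon
  push_neg at hcon
  apply hnt
  rw [tendsto_atTop]
  intro b
  obtain ⟨t₀, ht₀0, hb⟩ := hcon b
  filter_upwards [eventually_ge_atTop (max t₀ 0)] with t ht
  have h1 : t₀ ≤ t := (le_max_left _ _).trans ht
  have := hmono t₀ t ht₀0 h1
  linarith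

end Quantitative

section Main

lemma pos_of_mul_relu {b u : ℝ} (h : 0 < b * relu u) : 0 < b ∧ 0 < u := by
  have hb : 0 < b ∧ 0 < relu u := by
    rcases mul_pos_iff.mp h with ⟨h1, h2⟩ | ⟨h1, h2⟩
    · exact ⟨h1, h2⟩
    · exact absurd h2 (not_lt.2 (relu_nonneg _))
  refine ⟨hb.1, ?_⟩
  by_contra hle
  push_neg at hle
  have : relu u = 0 := max_eq_right hle
  rw [this] at hb
  exact lt_irrefl 0 hb.2

lemma main (s : ℝ) (hs : s = 1 ∨ s = -1)
    (hlive : ∃ i0 j0, C.y i0 = s ∧ 0 < C.y i0 * C.a 0 j0 * relu (dotp (C.w 0 j0) (C.x i0)))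
    (i : Fin n) (hyi : C.y i = s) :
    ∃ j, Tendsto (C.hf j i) atTop atTop := by
  by_contra hcon
  push_neg at hcon
  obtain ⟨i0, j0, hyi0, hlv⟩ := hlive
  rw [hyi0] at hlv
  have hlv' : 0 < (s * C.a 0 j0) * relu (C.hf j0 i0 0) := by
    have e : C.hf j0 i0 0 = dotp (C.w 0 j0) (C.x i0) := rfl
    rw [e]
    linarith [hlv]
  obtain ⟨hb0, hh0⟩ := pos_of_mul_relu hlv'
  have hP0 : C.PosOn s j0 := C.pos_of_init s hs j0 i0 hyi0 hb0 hh0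
  have hm0 : ∀ t, (0:ℝ) ≤ t → C.hf j0 i0 0 ≤ C.hf j0 i0 t :=
    fun t ht => C.mono_of_posOn s hs i0 hyi0 j0 hP0 le_rfl ht
  obtain ⟨H0, hH0⟩ := C.bdd_above_of_not_tendsto j0 i
    (fun t1 t2 h1 h12 => C.mono_of_posOn s hs i hyi j0 hP0 h1 h12) (hcon j0)
  obtain ⟨M, hM⟩ := C.r_int_bdd s hs i hyi j0 i0 hyi0 hP0 le_rfl hh0 hm0 hH0
  have hg := C.g_unbdd i0 hM
  obtain ⟨j₂, hj₂⟩ := C.pigeon s i0 hyi0 hg j0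
  have hP₂ : C.PosOn s j₂ := by
    apply C.pos_of_frequently s hs j₂
    intro T
    obtain ⟨t, ht1, ht2, ht3⟩ := hj₂ 0 T
    exact ⟨t, ht1, ht2, (pos_of_mul_relu ht3).1⟩
  obtain ⟨T₂, hT₂T, hT₂0, hT₂pos⟩ := hj₂ 0 0
  have hc₂ : 0 < C.hf j₂ i0 T₂ := (pos_of_mul_relu hT₂pos).2
  have hm₂ : ∀ t, T₂ ≤ t → C.hf j₂ i0 T₂ ≤ C.hf j₂ i0 t :=
    fun t ht => C.mono_of_posOn s hs i0 hyi0 j₂ hP₂ hT₂0 ht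
  obtain ⟨H₂, hH₂⟩ := C.bdd_above_of_not_tendsto j₂ i
    (fun t1 t2 h1 h12 => C.mono_of_posOn s hs i hyi j₂ hP₂ h1 h12) (hcon j₂)
  -- the outgoing weight of `j₂` is unbounded
  have hbu : ∀ K T, ∃ t, T ≤ t ∧ K < s * C.a t j₂ := by
    intro K T
    have hK'pos : (0:ℝ) < max K 1 := lt_of_lt_of_le one_pos (le_max_right _ _)
    obtain ⟨t, ht1, ht2, ht3⟩ := hj₂ (max K 1 * (max K 1 * norm2 (C.x i0))) T
    refine ⟨t, ht1, ?_⟩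
    have hbpos : 0 < s * C.a t j₂ := hP₂ t ht2
    have hψ : relu (C.hf j₂ i0 t) ≤ (s * C.a t j₂) * norm2 (C.x i0) := by
      have h5 := C.relu_h_le j₂ i0 (t := t) ht2
      rw [abs_sign_eq s hs hbpos] at h5
      exact h5
    by_contra hle
    push_neg at hle
    have hle' : s * C.a t j₂ ≤ max K 1 := hle.trans (le_max_left _ _)
    have hx0 : (0:ℝ) ≤ norm2 (C.x i0) := norm2_nonneg _
    have e1 : (s * C.a t j₂) * relu (C.hf j₂ i0 t)
        ≤ (s * C.a t j₂) * ((s * C.a t j₂) * norm2 (C.x i0)) :=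
      mul_le_mul_of_nonneg_left hψ hbpos.le
    have e2 : (s * C.a t j₂) * ((s * C.a t j₂) * norm2 (C.x i0))
        ≤ max K 1 * (max K 1 * norm2 (C.x i0)) := by
      have e3 : (s * C.a t j₂) * (s * C.a t j₂) ≤ max K 1 * max K 1 :=
        mul_le_mul hle' hle' hbpos.le hK'pos.le
      nlinarith [e3, hx0]
    linarith
  classical
  -- classify the same-class data points by eventual activation on neuron j₂
  set Act : Fin n → Prop := fun i' => C.y i' = s ∧ ∃ T, T₂ ≤ T ∧ 0 < C.hf j₂ i' T with hAct
  have hch : ∀ i', ∃ TM : ℝ × ℝ, Act i' →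
      (T₂ ≤ TM.1 ∧ ∀ t, TM.1 ≤ t → ∫ τ in TM.1..t, C.rf i' τ ≤ TM.2) := by
    intro i'
    by_cases hA : Act i'
    · obtain ⟨hyA, T', hT'1, hT'2⟩ := hA
      have hma : ∀ t, T' ≤ t → C.hf j₂ i' T' ≤ C.hf j₂ i' t :=
        fun t ht => C.mono_of_posOn s hs i' hyA j₂ hP₂ (hT₂0.trans hT'1) ht
      obtain ⟨M', hM'⟩ := C.r_int_bdd s hs i hyi j₂ i' hyA hP₂ (hT₂0.trans hT'1) hT'2 hma hH₂
      exact ⟨(T', M'), fun _ => ⟨hT'1, hM'⟩⟩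
    · exact ⟨(T₂, 0), fun h => absurd h hA⟩
  choose TM hTM using hch
  set SA : Finset (Fin n) := Finset.univ.filter Act with hSA
  set T₃ : ℝ := T₂ + ∑ i' ∈ SA, max ((TM i').1 - T₂) 0 with hT₃
  have hT₃ge : T₂ ≤ T₃ :=
    le_add_of_nonneg_right (Finset.sum_nonneg fun _ _ => le_max_right _ _)
  have hT₃0 : (0:ℝ) ≤ T₃ := hT₂0.trans hT₃ge
  have hT₃i' : ∀ i' ∈ SA, (TM i').1 ≤ T₃ := by
    intro i' hi'
    have hAi' : Act i' := (Finset.mem_filter.mp hi').2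
    have h1 : (TM i').1 - T₂ ≤ max ((TM i').1 - T₂) 0 := le_max_left _ _
    have h2 : max ((TM i').1 - T₂) 0 ≤ ∑ i'' ∈ SA, max ((TM i'').1 - T₂) 0 :=
      Finset.single_le_sum (f := fun i'' => max ((TM i'').1 - T₂) 0)
        (fun _ _ => le_max_right _ _) hi'
    rw [hT₃]
    linarith
  set cf : ℝ → ℝ := fun t => ∑ i' ∈ SA, C.rf i' t * norm2 (C.x i') with hcf
  have hcfc : Continuous cf := by
    apply continuous_finset_sum
    exact fun i' _ => (C.cont_rf i').mul continuous_const
  have hcfnn : ∀ t, 0 ≤ cf t :=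
    fun t => Finset.sum_nonneg fun i' _ => mul_nonneg (C.rf_pos i' t).le (norm2_nonneg _)
  have hcfint : ∀ t, T₃ ≤ t → ∫ τ in T₃..t, cf τ
      ≤ ∑ i' ∈ SA, norm2 (C.x i') * max ((TM i').2) 0 := by
    intro t ht
    have e : ∫ τ in T₃..t, cf τ = ∑ i' ∈ SA, ∫ τ in T₃..t, C.rf i' τ * norm2 (C.x i') :=
      intervalIntegral.integral_finset_sum
        (fun i' _ => ((C.cont_rf i').mul continuous_const).intervalIntegrable _ _)
    rw [e]
    apply Finset.sum_le_sum
    intro i' hi'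
    have hAi' : Act i' := (Finset.mem_filter.mp hi').2
    obtain ⟨hT1, hMi⟩ := hTM i' hAi'
    rw [intervalIntegral.integral_mul_const]
    have h3 : ∫ τ in T₃..t, C.rf i' τ ≤ (TM i').2 := by
      have hsplit : (∫ τ in (TM i').1..T₃, C.rf i' τ) + ∫ τ in T₃..t, C.rf i' τ
          = ∫ τ in (TM i').1..t, C.rf i' τ :=
        intervalIntegral.integral_add_adjacent_intervals (C.rfInt i' _ _) (C.rfInt i' _ _)
      have h4 := hMi t ((hT₃i' i' hi').trans ht)
      have h5 : 0 ≤ ∫ τ in (TM i').1..T₃, C.rf i' τ :=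
        intervalIntegral.integral_nonneg (hT₃i' i' hi') (fun τ _ => (C.rf_pos i' τ).le)
      linarith
    have hxnn := norm2_nonneg (C.x i')
    calc (∫ τ in T₃..t, C.rf i' τ) * norm2 (C.x i')
        ≤ max ((TM i').2) 0 * norm2 (C.x i') :=
          mul_le_mul_of_nonneg_right (h3.trans (le_max_left _ _)) hxnn
      _ = norm2 (C.x i') * max ((TM i').2) 0 := mul_comm _ _
  -- Grönwall for the outgoing weight of j₂
  have hKg : ∀ t, T₃ ≤ t →
      s * C.a t j₂ ≤ (s * C.a T₃ j₂) + ∫ τ in T₃..t, cf τ * (s * C.a τ j₂) := by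
    intro t ht
    have h0 := C.a_sub j₂ T₃ t
    have hsub : s * C.a t j₂ - s * C.a T₃ j₂ = ∫ τ in T₃..t, s * C.a' τ j₂ := by
      calc s * C.a t j₂ - s * C.a T₃ j₂ = s * (C.a t j₂ - C.a T₃ j₂) := by ring
        _ = s * ∫ τ in T₃..t, C.a' τ j₂ := by rw [h0]
        _ = ∫ τ in T₃..t, s * C.a' τ j₂ := (intervalIntegral.integral_const_mul s _).symm
    have hmono : ∫ τ in T₃..t, s * C.a' τ j₂ ≤ ∫ τ in T₃..t, cf τ * (s * C.a τ j₂) := by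
      apply intervalIntegral.integral_mono_ae_restrict ht
        ((C.aInt' j₂ T₃ t).const_mul s)
        ((hcfc.mul (continuous_const.mul (C.cont_a j₂))).intervalIntegrable _ _)
      have hae : ∀ᵐ τ ∂(volume.restrict (Set.Icc T₃ t)), τ ∈ Set.Ici (0:ℝ) → C.Good τ :=
        ae_restrict_of_ae C.good_ae'
      filter_upwards [hae, ae_restrict_mem measurableSet_Icc] with τ hGmem hmem
      have hτ0 : (0:ℝ) ≤ τ := hT₃0.trans hmem.1
      have hG := hGmem hτ0
      have hsig := C.good_a'_signed hG s hs j₂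
      have hbpos : 0 < s * C.a τ j₂ := hP₂ τ hτ0
      have hterm : ∀ i', (if C.y i' = s then C.rf i' τ * relu (C.hf j₂ i' τ) else 0)
          ≤ (if i' ∈ SA then C.rf i' τ * norm2 (C.x i') * (s * C.a τ j₂) else 0) := by
        intro i'
        by_cases hy' : C.y i' = s
        · rw [if_pos hy']
          by_cases hA : Act i'
          · have hin : i' ∈ SA := Finset.mem_filter.mpr ⟨Finset.mem_univ _, hA⟩
            rw [if_pos hin]
            have h5 := C.relu_h_le j₂ i' (t := τ) hτ0
            rw [abs_sign_eq s hs hbpos] at h5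
            have hr := (C.rf_pos i' τ).le
            nlinarith
          · have hnot : C.hf j₂ i' τ ≤ 0 := by
              by_contra hgt
              push_neg at hgt
              exact hA ⟨hy', τ, hT₃ge.trans hmem.1, hgt⟩
            have : relu (C.hf j₂ i' τ) = 0 := max_eq_right hnot
            rw [this, mul_zero]
            by_cases hin : i' ∈ SA
            · rw [if_pos hin]
              exact mul_nonneg (mul_nonneg (C.rf_pos i' τ).le (norm2_nonneg _)) hbpos.le
            · rw [if_neg hin]
        · rw [if_neg hy']
          by_cases hin : i' ∈ SA
          · rw [if_pos hin]
            exact mul_nonneg (mul_nonneg (C.rf_pos i' τ).le (norm2_nonneg _)) hbpos.le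
          · rw [if_neg hin]
      have hsum : ∑ i', (if i' ∈ SA then C.rf i' τ * norm2 (C.x i') * (s * C.a τ j₂) else 0)
          = cf τ * (s * C.a τ j₂) := by
        rw [Finset.sum_ite_mem, Finset.univ_inter, hcf]
        dsimp only
        rw [Finset.sum_mul]
      calc s * C.a' τ j₂ ≤ ∑ i', (if C.y i' = s then C.rf i' τ * relu (C.hf j₂ i' τ) else 0) := hsig
        _ ≤ ∑ i', (if i' ∈ SA then C.rf i' τ * norm2 (C.x i') * (s * C.a τ j₂) else 0) :=
            Finset.sum_le_sum fun i' _ => hterm i'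
        _ = cf τ * (s * C.a τ j₂) := hsum
    linarith
  have hgron := gronwall_integral (u := fun t => s * C.a t j₂)
    (continuous_const.mul (C.cont_a j₂)) hcfc (fun t _ => hcfnn t) hKg
  have hKpos : 0 < s * C.a T₃ j₂ := hP₂ T₃ hT₃0
  obtain ⟨t, ht1, ht2⟩ := hbu
    ((s * C.a T₃ j₂) * Real.exp (∑ i' ∈ SA, norm2 (C.x i') * max ((TM i').2) 0)) T₃
  have h6 := hgron t ht1
  have h7 : Real.exp (∫ τ in T₃..t, cf τ)
      ≤ Real.exp (∑ i' ∈ SA, norm2 (C.x i') * max ((TM i').2) 0) :=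
    Real.exp_le_exp.2 (hcfint t ht1)
  have h8 : (s * C.a T₃ j₂) * Real.exp (∫ τ in T₃..t, cf τ)
      ≤ (s * C.a T₃ j₂) * Real.exp (∑ i' ∈ SA, norm2 (C.x i') * max ((TM i').2) 0) :=
    mul_le_mul_of_nonneg_left h7 hKpos.le
  linarith

end Main

end GF

/-- for every `i` there exists `j` such that `w_j(t)ᵀ x_i → ∞` as `t → ∞`. -/
theorem gradient_flow_some_neuron_to_infinity
    (d n k : ℕ) (x : Fin n → Fin d → ℝ) (y : Fin n → ℝ)
    (hy : ∀ i, y i = 1 ∨ y i = -1)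
    (hsep1 : ∀ i i', y i = y i' → 0 < dotp (x i) (x i'))
    (hsep2 : ∀ i i', y i ≠ y i' → dotp (x i) (x i') ≤ 0)
    (ℓ : ℝ → ℝ)
    (hℓ : (ℓ = fun u => Real.exp (-u)) ∨ (ℓ = fun u => Real.log (1 + Real.exp (-u))))
    (w : ℝ → Fin k → Fin d → ℝ) (a : ℝ → Fin k → ℝ)
    (w' : ℝ → Fin k → Fin d → ℝ) (a' : ℝ → Fin k → ℝ)
    (hwInt : ∀ (j : Fin k) (i : Fin d) (t : ℝ),
      IntervalIntegrable (fun s => w' s j i) volume 0 t)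
    (haInt : ∀ (j : Fin k) (t : ℝ), IntervalIntegrable (fun s => a' s j) volume 0 t)
    (hwFTC : ∀ (t : ℝ) (j : Fin k) (i : Fin d),
      w t j i = w 0 j i + ∫ s in (0:ℝ)..t, w' s j i)
    (haFTC : ∀ (t : ℝ) (j : Fin k), a t j = a 0 j + ∫ s in (0:ℝ)..t, a' s j)
    (hODE : ∀ᵐ t ∂(volume.restrict (Set.Ici (0:ℝ))),
      ∃ σ : Fin n → Fin k → ℝ,
        (∀ i j, 0 ≤ σ i j ∧ σ i j ≤ 1) ∧
        (∀ i j, dotp (w t j) (x i) < 0 → σ i j = 0) ∧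
        (∀ i j, 0 < dotp (w t j) (x i) → σ i j = 1) ∧
        (∀ j ic, w' t j ic =
          -∑ i, deriv ℓ (y i * net (w t) (a t) (x i)) * y i * a t j * σ i j * x i ic) ∧
        (∀ j, a' t j =
          -∑ i, deriv ℓ (y i * net (w t) (a t) (x i)) * y i * relu (dotp (w t j) (x i))))
    (hbal : ∀ j, |a 0 j| = norm2 (w 0 j) ∧ a 0 j ≠ 0)
    (hlive : ∀ s : ℝ, s = 1 ∨ s = -1 →
      ∃ i j, y i = s ∧ 0 < y i * a 0 j * relu (dotp (w 0 j) (x i))) :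
    ∀ i : Fin n, ∃ j : Fin k, Tendsto (fun t => dotp (w t j) (x i)) atTop atTop := by
  intro i
  let C : GF d n k :=
    ⟨x, y, ℓ, w, a, w', a', hy, hsep1, hsep2, hℓ, hwInt, haInt, hwFTC, haFTC,
      (fun j => (hbal j).1), hODE⟩
  obtain ⟨j, hj⟩ := C.main (y i) (hy i) (hlive (y i) (hy i)) i rfl
  exact ⟨j, hj⟩
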